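/- Let 3 ≤ k < 2i+1 with k odd. If y·P_{2i+3}(u) ≡ z·P_{2i+k+1}(u) (mod P_{2i+1}(u)) with 0 < z ≤ u and y·P_{2i+3}(u) > z·P_{2i+k+1}(u) > 0, y minimal positive, then z = u and y = P_k(u); moreover P_k(u)·P_{2i+3}(u) = P_{k-2}(u)·P_{2i+1}(u) + u·P_{2i+k+1}(u). -/
import Mathlib

def pell (u : ℕ) : ℕ → ℕ
  | 0 => 0
  | 1 => 1
  | n + 2 => u * pell u (n + 1) + pell u n

lemma pell_step (u n : ℕ) : pell u (n+2) = u * pell u (n+1) + pell u n := rfl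

lemma pell_pos (u : ℕ) (hu : 1 ≤ u) : ∀ n, 1 ≤ n → 0 < pell u n
  | 1, _ => by simp [pell]
  | n+2, _ => by
    rcases Nat.eq_zero_or_pos n with h | h
    · subst h; simp [pell_step, pell]; omega
    · have h1 := pell_pos u hu (n+1) (by omega)
      rw [pell_step]
      have : 0 < u * pell u (n+1) := Nat.mul_pos hu h1
      omega

lemma pell_le_succ (u : ℕ) (hu : 1 ≤ u) (n : ℕ) : pell u n ≤ pell u (n+1) := by
  cases n with
  | zero => simp [pell]
  | succ n =>
    rw [pell_step]
    have := Nat.le_mul_of_pos_left (pell u (n+1)) hu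
    omega

lemma pell_mono (u : ℕ) (hu : 1 ≤ u) {m n : ℕ} (h : m ≤ n) : pell u m ≤ pell u n :=
  monotone_nat_of_le_succ (pell_le_succ u hu) h

lemma pell_add (u : ℕ) : ∀ n m, pell u (m + n + 1) =
    pell u (m + 1) * pell u (n + 1) + pell u m * pell u n
  | 0, m => by simp [pell]
  | 1, m => by
    have : m + 1 + 1 = m + 2 := rfl
    rw [show m + 1 + 1 = m + 2 from rfl, pell_step]
    simp [pell, pell_step]
    ring
  | n+2, m => by
    have h1 := pell_add u (n+1) m
    have h2 := pell_add u n m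
    have e : m + (n+2) + 1 = (m + n + 1) + 2 := by ring
    have h3 : pell u (n+1+1) = u * pell u (n+1) + pell u n := pell_step u n
    have h4 : pell u (n+1+1+1) = u * pell u (n+1+1) + pell u (n+1) := pell_step u (n+1)
    rw [e, pell_step, show m + n + 1 + 1 = m + (n+1) + 1 from by ring, h1, h2, h4, h3]
    ring

lemma pell_coprime (u : ℕ) : ∀ n, Nat.Coprime (pell u n) (pell u (n+1))
  | 0 => by simp [pell, Nat.Coprime]
  | n+1 => by
    have ih := pell_coprime u n
    have h3 : pell u (n+1+1) = pell u n + u * pell u (n+1) := by rw [pell_step]; ring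
    rw [h3]
    exact (Nat.coprime_add_mul_right_right _ _ u).mpr (Nat.coprime_comm.mp ih)

lemma pell_odd_modeq (u : ℕ) : ∀ t, pell u (2*t+1) ≡ 1 [MOD u]
  | 0 => by rfl
  | t+1 => by
    have ih := pell_odd_modeq u t
    have e : 2*(t+1)+1 = (2*t+1) + 2 := by ring
    rw [e, pell_step]
    calc u * pell u (2*t+1+1) + pell u (2*t+1) ≡ 0 * pell u (2*t+1+1) + pell u (2*t+1) [MOD u] :=
          Nat.ModEq.add_right _ (Nat.ModEq.mul_right _ (Nat.modEq_zero_iff_dvd.mpr dvd_rfl))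
      _ ≡ 1 [MOD u] := by simpa using ih
theorem stmt_16 (u : ℕ) (hu : 1 ≤ u) (i k : ℕ) (hk3 : 3 ≤ k) (hk : k < 2 * i + 1)
    (hodd : Odd k) (y z : ℕ) (hy : 0 < y) (hz : 0 < z) (hzu : z ≤ u)
    (hcong : y * pell u (2 * i + 3) ≡ z * pell u (2 * i + k + 1) [MOD pell u (2 * i + 1)])
    (hgt : y * pell u (2 * i + 3) > z * pell u (2 * i + k + 1))
    (hpos : 0 < z * pell u (2 * i + k + 1))
    (hmin : ∀ y' z' : ℕ, 0 < y' → 0 < z' → z' ≤ u →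
      y' * pell u (2 * i + 3) ≡ z' * pell u (2 * i + k + 1) [MOD pell u (2 * i + 1)] →
      y' * pell u (2 * i + 3) > z' * pell u (2 * i + k + 1) → y ≤ y') :
    z = u ∧ y = pell u k ∧
      pell u k * pell u (2 * i + 3) =
        pell u (k - 2) * pell u (2 * i + 1) + u * pell u (2 * i + k + 1) := by
  obtain ⟨j, hkj⟩ : ∃ j, k = j + 2 := ⟨k - 2, by omega⟩
  have hi2 : 2 ≤ i := by obtain ⟨t, ht⟩ := hodd; omega
  -- basic pell facts
  have e2i3 : pell u (2 * i + 3) = u * pell u (2 * i + 2) + pell u (2 * i + 1) := by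
    rw [show 2 * i + 3 = (2 * i + 1) + 2 from by omega]; exact pell_step u (2 * i + 1)
  have e2i2 : pell u (2 * i + 2) = u * pell u (2 * i + 1) + pell u (2 * i) := by
    rw [show 2 * i + 2 = 2 * i + 2 from rfl]; exact pell_step u (2 * i)
  have ek : pell u k = u * pell u (j + 1) + pell u j := by rw [hkj]; exact pell_step u j
  -- the identity
  have eadd : pell u (2 * i + k + 1) =
      pell u (2 * i + 3) * pell u (j + 1) + pell u (2 * i + 2) * pell u j := by
    rw [show 2 * i + k + 1 = (2 * i + 2) + j + 1 from by omega,
      show 2 * i + 3 = (2 * i + 2) + 1 from by omega]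
    exact pell_add u j (2 * i + 2)
  have hid : pell u k * pell u (2 * i + 3) =
      pell u (k - 2) * pell u (2 * i + 1) + u * pell u (2 * i + k + 1) := by
    rw [show k - 2 = j from by omega, eadd, ek, e2i3, e2i2]; ring
  set N := pell u (2 * i + 1) with hN
  set A := pell u (2 * i) with hA
  have hNpos : 0 < N := pell_pos u hu _ (by omega)
  have hPk : 0 < pell u k := pell_pos u hu _ (by omega)
  -- congruence c1
  have c1 : pell u (2 * i + 3) ≡ u * A [MOD N] := by
    have h : pell u (2 * i + 3) = u * A + (u * u + 1) * N := by rw [e2i3, e2i2]; ring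
    show _ % _ = _ % _
    rw [h, Nat.add_mul_mod_self_right]
  -- congruence c2
  have c2 : pell u (2 * i + k + 1) ≡ pell u k * A [MOD N] := by
    have h : pell u (2 * i + k + 1) = pell u k * A + (pell u k * u + pell u (j+1)) * N := by
      rw [eadd, ek, e2i3, e2i2]; ring
    show _ % _ = _ % _
    rw [h, Nat.add_mul_mod_self_right]
  -- cancel A
  have hyz : y * u ≡ z * pell u k [MOD N] := by
    have t1 := (c1.mul_left y).symm.trans (hcong.trans (c2.mul_left z))
    have t2 : (y * u) * A ≡ (z * pell u k) * A [MOD N] := by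
      rw [Nat.mul_assoc, Nat.mul_assoc]; exact t1
    exact Nat.ModEq.cancel_right_of_coprime
      (Nat.coprime_comm.mp (pell_coprime u (2 * i))) t2
  -- minimality: y ≤ pell u k
  have hjpos : 0 < pell u j := pell_pos u hu _ (by omega)
  have ccong : pell u k * pell u (2 * i + 3) ≡ u * pell u (2 * i + k + 1) [MOD N] := by
    show _ % _ = _ % _
    rw [hid, Nat.add_comm, Nat.mul_comm (pell u (k - 2)) N, Nat.add_mul_mod_self_left]
  have cgt : pell u k * pell u (2 * i + 3) > u * pell u (2 * i + k + 1) := by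
    have : 0 < pell u (k - 2) * N :=
      Nat.mul_pos (by rw [show k - 2 = j from by omega]; exact hjpos) hNpos
    omega
  have hyPk : y ≤ pell u k := hmin (pell u k) u hPk (by omega) le_rfl ccong cgt
  -- bound : u * pell u k < N
  have hbound : u * pell u k < N := by
    have h1 : pell u (k + 2) ≤ N := pell_mono u hu (by obtain ⟨t, ht⟩ := hodd; omega)
    have h2 : pell u (k + 2) = u * pell u (k + 1) + pell u k := pell_step u k
    have h3 : pell u k + 1 ≤ pell u (k + 1) := by
      have h4 : pell u (k + 1) = u * pell u k + pell u (j + 1) := by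
        rw [show k + 1 = (j + 1) + 2 from by omega, pell_step,
          show j + 1 + 1 = j + 2 from rfl, ← hkj]
      have h5 : 0 < pell u (j + 1) := pell_pos u hu _ (by omega)
      have h6 : pell u k ≤ u * pell u k := Nat.le_mul_of_pos_left _ hu
      omega
    calc u * pell u k < u * (pell u k + 1) := by
          have he : u * (pell u k + 1) = u * pell u k + u := by ring
          omega
      _ ≤ u * pell u (k + 1) := Nat.mul_le_mul_left u h3
      _ ≤ pell u (k + 2) := by omega
      _ ≤ N := h1
  -- equality
  have heq : y * u = z * pell u k := by
    have h1 : y * u < N := by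
      have : y * u ≤ u * pell u k := by
        rw [Nat.mul_comm y u]; exact Nat.mul_le_mul_left u hyPk
      omega
    have h2 : z * pell u k < N := by
      have : z * pell u k ≤ u * pell u k := Nat.mul_le_mul_right _ hzu
      omega
    have := hyz
    rwa [Nat.ModEq, Nat.mod_eq_of_lt h1, Nat.mod_eq_of_lt h2] at this
  -- coprime u (pell u k)
  have hco : Nat.Coprime u (pell u k) := by
    rcases Nat.eq_or_lt_of_le hu with h | h
    · rw [← h]; exact Nat.coprime_one_left _
    · obtain ⟨t, ht⟩ := hodd
      have hm : pell u k % u = 1 % u := by rw [ht]; exact pell_odd_modeq u t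
      rw [Nat.one_mod_eq_one.mpr (by omega)] at hm
      rw [Nat.Coprime, Nat.gcd_rec u (pell u k), hm, Nat.gcd_one_left]
  have hdz : u ∣ z := by
    refine hco.dvd_of_dvd_mul_right ⟨y, ?_⟩
    rw [← heq]; ring
  have hzeq : z = u := Nat.le_antisymm hzu (Nat.le_of_dvd hz hdz)
  have hyeq : y = pell u k := by
    have h7 : u * y = u * pell u k := by
      rw [Nat.mul_comm u y, heq, hzeq]
    exact Nat.eq_of_mul_eq_mul_left (by omega) h7
  exact ⟨hzeq, hyeq, hid⟩
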